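/- Assume (A-1). Let θ₁, θ₂ ∈ ℂ with Im θ₁ < 0 and Im θ₂ < 0, and let z ∈ ℂ satisfy |z| > e^{Im θ₁} and |z| > e^{Im θ₂}. Then z is an eigenvalue of U(θ₁) if and only if z is an eigenvalue of U(θ₂). In particular, the notion of resonance of U does not depend on the choice of θ. -/

import Mathlib

noncomputable section

namespace QWPaper

open Complex

/-- Sites of the two-dimensional lattice. -/
abbrev Site : Type := ℤ × ℤ

/-- Chirality indices: `0 = ←`, `1 = →`, `2 = ↓`, `3 = ↑`. -/
abbrev Chir : Type := Fin 4

abbrev V : Type := EuclideanSpace ℂ (Fin 4)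

/-- The Hilbert space `H = ℓ²(ℤ²; ℂ⁴)`. -/
abbrev H : Type := lp (fun _ : Site => V) 2

/-- The inner domain `Ω^i = {x : |x₁| ≤ M₀, |x₂| ≤ M₀}`. -/
def innerDom (M₀ : ℤ) : Set Site := {x | |x.1| ≤ M₀ ∧ |x.2| ≤ M₀}

/-- `S` is the shift operator:
`(Su)(x) = (u_←(x+e₁), u_→(x−e₁), u_↓(x+e₂), u_↑(x−e₂))`. -/
def IsShiftOp (S : H →L[ℂ] H) : Prop :=
  ∀ (u : H) (x : Site),
    (S u) x 0 = u (x.1 + 1, x.2) 0 ∧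
    (S u) x 1 = u (x.1 - 1, x.2) 1 ∧
    (S u) x 2 = u (x.1, x.2 + 1) 2 ∧
    (S u) x 3 = u (x.1, x.2 - 1) 3

/-- `A` is the bounded operator of pointwise multiplication by the matrix family `C`. -/
def IsCoinOp (A : H →L[ℂ] H) (C : Site → Matrix Chir Chir ℂ) : Prop :=
  ∀ (u : H) (x : Site) (i : Chir), (A u) x i = ∑ j : Chir, C x i j * u x j

/-- Every coin matrix is unitary. -/
def IsUnitaryCoin (C : Site → Matrix Chir Chir ℂ) : Prop :=
  ∀ x, C x ∈ Matrix.unitaryGroup Chir ℂ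

/-- Assumption (A-1): `C(x) = I₄` off `Ω^i`, with `M₀ ≥ 1`. -/
def SatisfiesA1 (C : Site → Matrix Chir Chir ℂ) (M₀ : ℤ) : Prop :=
  1 ≤ M₀ ∧ ∀ x, x ∉ innerDom M₀ → C x = 1

/-- `D_x(θ) = diag(e^{iθx₁}, e^{−iθx₁}, e^{iθx₂}, e^{−iθx₂})`. -/
def Dmat (θ : ℂ) (x : Site) : Matrix Chir Chir ℂ :=
  Matrix.diagonal ![Complex.exp (Complex.I * θ * x.1), Complex.exp (-(Complex.I * θ * x.1)),
    Complex.exp (Complex.I * θ * x.2), Complex.exp (-(Complex.I * θ * x.2))]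

/-- The translated coin `D_x(θ) C(x) D_x(θ)⁻¹`. -/
def transCoin (θ : ℂ) (C : Site → Matrix Chir Chir ℂ) (x : Site) : Matrix Chir Chir ℂ :=
  Dmat θ x * C x * (Dmat θ x)⁻¹

/-- The complex translated walk `U(θ) = e^{−iθ} S M(θ)`. -/
def transWalkOp (θ : ℂ) (S Mθ : H →L[ℂ] H) : H →L[ℂ] H :=
  Complex.exp (-(Complex.I * θ)) • (S.comp Mθ)

/-- `⟨x⟩ = (1 + |x|²)^{1/2}`. -/
def jnorm (x : Site) : ℝ := Real.sqrt (1 + ((x.1 : ℝ) ^ 2 + (x.2 : ℝ) ^ 2))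

/-- Super-exponentially decreasing elements of `H`: `e^{τ⟨x⟩} f ∈ H` for every `τ > 0`. -/
def SuperExpDecay (f : H) : Prop :=
  ∀ τ : ℝ, 0 < τ → Memℓp (fun x : Site => (Real.exp (τ * jnorm x) • f x : V)) 2

/-- Pointwise shift of an arbitrary `ℂ⁴`-valued map on `ℤ²`. -/
def ptShift (v : Site → Chir → ℂ) (x : Site) : Chir → ℂ :=
  ![v (x.1 + 1, x.2) 0, v (x.1 - 1, x.2) 1, v (x.1, x.2 + 1) 2, v (x.1, x.2 - 1) 3]

/-- Pointwise coin action on an arbitrary `ℂ⁴`-valued map on `ℤ²`. -/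
def ptCoin (C : Site → Matrix Chir Chir ℂ) (u : Site → Chir → ℂ) (x : Site) (i : Chir) : ℂ :=
  ∑ j : Chir, C x i j * u x j

/-- Pointwise action of the walk `U = SC` on arbitrary `ℂ⁴`-valued maps. -/
def ptWalk (C : Site → Matrix Chir Chir ℂ) (u : Site → Chir → ℂ) : Site → Chir → ℂ :=
  ptShift (ptCoin C u)

/-- `u` is a pointwise solution of `U u = e^{−iκ} u`. -/
def IsPtSolution (C : Site → Matrix Chir Chir ℂ) (κ : ℂ) (u : Site → Chir → ℂ) : Prop :=
  ∀ (x : Site) (i : Chir), ptWalk C u x i = Complex.exp (-(Complex.I * κ)) * u x i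

/-- `u` is outgoing with the explicit sequences `aL aR aD aU`. -/
def IsOutgoingWith (M₀ : ℤ) (κ : ℂ) (aL aR aD aU : ℤ → ℂ) (u : Site → Chir → ℂ) : Prop :=
  (∀ x : Site, x.1 < -M₀ → u x 0 = aL x.2 * Complex.exp (-(Complex.I * κ * x.1))) ∧
  (∀ x : Site, M₀ < x.1 → u x 0 = 0) ∧
  (∀ x : Site, x.1 < -M₀ → u x 1 = 0) ∧
  (∀ x : Site, M₀ < x.1 → u x 1 = aR x.2 * Complex.exp (Complex.I * κ * x.1)) ∧
  (∀ x : Site, x.2 < -M₀ → u x 2 = aD x.1 * Complex.exp (-(Complex.I * κ * x.2))) ∧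
  (∀ x : Site, M₀ < x.2 → u x 2 = 0) ∧
  (∀ x : Site, x.2 < -M₀ → u x 3 = 0) ∧
  (∀ x : Site, M₀ < x.2 → u x 3 = aU x.1 * Complex.exp (Complex.I * κ * x.2))

/-- `u` is an outgoing map. -/
def IsOutgoing (M₀ : ℤ) (κ : ℂ) (u : Site → Chir → ℂ) : Prop :=
  ∃ aL aR aD aU : ℤ → ℂ, IsOutgoingWith M₀ κ aL aR aD aU u

/-- Elastic coin: column `j` of `C_el(x)` is `e^{iα_j(x)} 𝐞_{σ(x)(j)}`. -/
def elasticCoin (σ : Site → Equiv.Perm Chir) (α : Site → Chir → ℝ) (x : Site) :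
    Matrix Chir Chir ℂ :=
  Matrix.of fun i j => if i = σ x j then Complex.exp (Complex.I * (α x j : ℂ)) else 0

/-- The initial state `δ_y 𝐞_j ∈ H`. -/
def deltaState (y : Site) (j : Chir) : H := lp.single 2 y (EuclideanSpace.single j 1)

/-- `(q, p)` is the trajectory map of the elastic walk `Uel`:
`Uel^t (δ_y 𝐞_j)` is a modulus-one multiple of `δ_{q(t,y,j)} 𝐞_{p(t,y,j)}`. -/
def IsTrajectory (Uel : unitary (H →L[ℂ] H))
    (q : ℤ → Site → Chir → Site) (p : ℤ → Site → Chir → Chir) : Prop :=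
  (∀ y j, q 0 y j = y ∧ p 0 y j = j) ∧
  ∀ (t : ℤ) (y : Site) (j : Chir), ∃ c : ℂ, ‖c‖ = 1 ∧
    ((Uel ^ t : unitary (H →L[ℂ] H)) : H →L[ℂ] H) (deltaState y j)
      = c • deltaState (q t y j) (p t y j)

/-- Euclidean norm of a lattice point. -/
def znorm (x : Site) : ℝ := Real.sqrt ((x.1 : ℝ) ^ 2 + (x.2 : ℝ) ^ 2)

/-- The parts of the barrier `K`. -/
def K1p (M₀ : ℤ) : Set Site := {x | x.1 = M₀ ∧ |x.2| ≤ M₀}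
def K1m (M₀ : ℤ) : Set Site := {x | x.1 = -M₀ ∧ |x.2| ≤ M₀}
def K2p (M₀ : ℤ) : Set Site := {x | x.2 = M₀ ∧ |x.1| ≤ M₀}
def K2m (M₀ : ℤ) : Set Site := {x | x.2 = -M₀ ∧ |x.1| ≤ M₀}
def Kbar (M₀ : ℤ) : Set Site := K1p M₀ ∪ K1m M₀ ∪ K2p M₀ ∪ K2m M₀

/-- The exterior domain `Ω^e = (ℤ² \ Ω^i) ∪ K`. -/
def outerDom (M₀ : ℤ) : Set Site := {x | x ∉ innerDom M₀} ∪ Kbar M₀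

/-- Membership in the interior space `H_i`. -/
def memHi (M₀ : ℤ) (u : H) : Prop :=
  (∀ x, x ∉ innerDom M₀ → ∀ i : Chir, u x i = 0) ∧
  (∀ x ∈ K1p M₀, u x 0 = 0) ∧ (∀ x ∈ K1m M₀, u x 1 = 0) ∧
  (∀ x ∈ K2p M₀, u x 2 = 0) ∧ (∀ x ∈ K2m M₀, u x 3 = 0)

/-- Membership in the exterior space `H_e`. -/
def memHe (M₀ : ℤ) (u : H) : Prop :=
  (∀ x, x ∉ outerDom M₀ → ∀ i : Chir, u x i = 0) ∧
  (∀ x ∈ K1m M₀ ∪ K2p M₀ ∪ K2m M₀, u x 0 = 0) ∧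
  (∀ x ∈ K1p M₀ ∪ K2p M₀ ∪ K2m M₀, u x 1 = 0) ∧
  (∀ x ∈ K2m M₀ ∪ K1p M₀ ∪ K1m M₀, u x 2 = 0) ∧
  (∀ x ∈ K2p M₀ ∪ K1p M₀ ∪ K1m M₀, u x 3 = 0)

/-- The non-penetrable barrier conditions for `U_np`. -/
def IsBarrierWalk (M₀ : ℤ) (Unp : H →L[ℂ] H) : Prop :=
  ∀ u : H,
    (∀ x ∈ K1p M₀, (Unp u) (x.1 + 1, x.2) 1 = u x 0) ∧
    (∀ x ∈ K1m M₀, (Unp u) (x.1 - 1, x.2) 0 = u x 0) ∧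
    (∀ x ∈ K2p M₀, (Unp u) (x.1, x.2 + 1) 3 = u x 2) ∧
    (∀ x ∈ K2m M₀, (Unp u) (x.1, x.2 - 1) 2 = u x 3)

/-- The rectangular loop `L_{ε,s}(μ)` (boundary of the rectangle with half-widths `a`, `b`). -/
def loopSet (μ a b : ℝ) : Set ℂ :=
  {κ | |κ.re - μ| ≤ a ∧ |κ.im| ≤ b ∧ (|κ.re - μ| = a ∨ |κ.im| = b)}

/-- The four-corner elastic coin. -/
def fourCornerCoin (m₀ n₀ : ℤ) (x : Site) : Matrix Chir Chir ℂ :=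
  if x = ((0 : ℤ), (0 : ℤ)) then !![0,1,0,0; 0,0,1,0; 0,0,0,1; 1,0,0,0]
  else if x = (m₀, (0 : ℤ)) then !![0,0,1,0; 1,0,0,0; 0,0,0,1; 0,1,0,0]
  else if x = (m₀, n₀) then !![0,0,0,1; 1,0,0,0; 0,1,0,0; 0,0,1,0]
  else if x = ((0 : ℤ), n₀) then !![0,1,0,0; 0,0,0,1; 1,0,0,0; 0,0,1,0]
  else 1

/-- The four corners. -/
def corners (m₀ n₀ : ℤ) : Set Site :=
  {((0 : ℤ), (0 : ℤ)), (m₀, (0 : ℤ)), (m₀, n₀), ((0 : ℤ), n₀)}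

/-- A perturbed four-corner coin `C_ε`. -/
def IsPerturbedFourCorner (m₀ n₀ : ℤ) (ε : ℝ) (Cε : Site → Matrix Chir Chir ℂ) : Prop :=
  IsUnitaryCoin Cε ∧
  (∀ x, x ∉ corners m₀ n₀ → Cε x = 1) ∧
  (∀ x ∈ corners m₀ n₀, ∀ i j : Chir, ‖Cε x i j - fourCornerCoin m₀ n₀ x i j‖ < ε) ∧
  Cε ((0 : ℤ), (0 : ℤ)) 1 0 = 0 ∧ Cε ((0 : ℤ), (0 : ℤ)) 3 2 = 0 ∧
  Cε (m₀, (0 : ℤ)) 3 2 = 0 ∧ Cε (m₀, (0 : ℤ)) 0 1 = 0 ∧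
  Cε (m₀, n₀) 2 3 = 0 ∧ Cε (m₀, n₀) 0 1 = 0 ∧
  Cε ((0 : ℤ), n₀) 1 0 = 0 ∧ Cε ((0 : ℤ), n₀) 2 3 = 0

/-- `c_ε⁺ = c_{↑,←}(0,0) c_{←,↓}(m₀,0) c_{↓,→}(m₀,n₀) c_{→,↑}(0,n₀)`. -/
def cPlus (m₀ n₀ : ℤ) (Cε : Site → Matrix Chir Chir ℂ) : ℂ :=
  Cε ((0 : ℤ), (0 : ℤ)) 3 0 * Cε (m₀, (0 : ℤ)) 0 2 * Cε (m₀, n₀) 2 1 * Cε ((0 : ℤ), n₀) 1 3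

/-- `c_ε⁻ = c_{→,↓}(0,0) c_{↑,→}(m₀,0) c_{←,↑}(m₀,n₀) c_{↓,←}(0,n₀)`. -/
def cMinus (m₀ n₀ : ℤ) (Cε : Site → Matrix Chir Chir ℂ) : ℂ :=
  Cε ((0 : ℤ), (0 : ℤ)) 1 2 * Cε (m₀, (0 : ℤ)) 3 1 * Cε (m₀, n₀) 0 3 * Cε ((0 : ℤ), n₀) 2 0

/-- `u ∈ H` is supported on the set `A ⊆ ℤ² × {←,→,↓,↑}`. -/
def SupportedOn (u : H) (A : Set (Site × Chir)) : Prop :=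
  ∀ (x : Site) (i : Chir), (x, i) ∉ A → u x i = 0

/-- The image of the closed trajectory `Φ₊` of the four-corner walk. -/
def imPhiPlus (m₀ n₀ : ℤ) : Set (Site × Chir) :=
  {w | ∃ t : ℤ, 1 ≤ t ∧ t ≤ n₀ ∧ w = (((0 : ℤ), t), (3 : Chir))} ∪
  {w | ∃ t : ℤ, 1 ≤ t ∧ t ≤ m₀ ∧ w = ((t, n₀), (1 : Chir))} ∪
  {w | ∃ t : ℤ, 0 ≤ t ∧ t ≤ n₀ - 1 ∧ w = ((m₀, t), (2 : Chir))} ∪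
  {w | ∃ t : ℤ, 0 ≤ t ∧ t ≤ m₀ - 1 ∧ w = ((t, (0 : ℤ)), (0 : Chir))}

/-- The image of the reversed closed trajectory `Φ₋` of the four-corner walk. -/
def imPhiMinus (m₀ n₀ : ℤ) : Set (Site × Chir) :=
  {w | ∃ t : ℤ, 1 ≤ t ∧ t ≤ m₀ ∧ w = ((t, (0 : ℤ)), (1 : Chir))} ∪
  {w | ∃ t : ℤ, 1 ≤ t ∧ t ≤ n₀ ∧ w = ((m₀, t), (3 : Chir))} ∪
  {w | ∃ t : ℤ, 0 ≤ t ∧ t ≤ m₀ - 1 ∧ w = ((t, n₀), (0 : Chir))} ∪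
  {w | ∃ t : ℤ, 0 ≤ t ∧ t ≤ n₀ - 1 ∧ w = (((0 : ℤ), t), (2 : Chir))}

/-- The eight outgoing tails starting from the four corners. -/
def tails (m₀ n₀ : ℤ) : Set (Site × Chir) :=
  {w | ∃ N y₂ : ℤ, 1 ≤ N ∧ (y₂ = 0 ∨ y₂ = n₀) ∧ w = ((-N, y₂), (0 : Chir))} ∪
  {w | ∃ N y₁ : ℤ, 1 ≤ N ∧ (y₁ = 0 ∨ y₁ = m₀) ∧ w = ((y₁, n₀ + N), (3 : Chir))} ∪
  {w | ∃ N y₁ : ℤ, 1 ≤ N ∧ (y₁ = 0 ∨ y₁ = m₀) ∧ w = ((y₁, -N), (2 : Chir))} ∪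
  {w | ∃ N y₂ : ℤ, 1 ≤ N ∧ (y₂ = 0 ∨ y₂ = n₀) ∧ w = ((m₀ + N, y₂), (1 : Chir))}

/-- The shape resonance perturbation `C_ε` of the barrier coin `C_np`. -/
def IsShapePerturbation (M₀ : ℤ) (Cnp : Site → Matrix Chir Chir ℂ) (ε : ℝ)
    (Cε : Site → Matrix Chir Chir ℂ) : Prop :=
  IsUnitaryCoin Cε ∧ (∀ x, x ∉ Kbar M₀ → Cε x = Cnp x) ∧
  (∀ x ∈ Kbar M₀, ∀ i j : Chir, ‖Cε x i j - Cnp x i j‖ < ε)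

/-- Counterclockwise contour integral of an operator-valued map over the boundary of the
rectangle centered at `μ ∈ ℝ` with half-widths `a` and `b`. -/
def rectIntegral (f : ℂ → (H →L[ℂ] H)) (μ a b : ℝ) : H →L[ℂ] H :=
  ((∫ t in (μ - a)..(μ + a), f (t - b * Complex.I)) -
      (∫ t in (μ - a)..(μ + a), f (t + b * Complex.I))) +
  Complex.I • ((∫ s in (-b)..b, f ((μ + a : ℝ) + s * Complex.I)) -
      (∫ s in (-b)..b, f ((μ - a : ℝ) + s * Complex.I)))

/-- The Riesz-type projection `(1/2π) ∮ e^{−iκ} (A − e^{−iκ})^{−1} dκ` over the rectangular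
loop of half-widths `a`, `b` around `μ`. -/
def rieszProj (A : H →L[ℂ] H) (μ a b : ℝ) : H →L[ℂ] H :=
  (1 / (2 * Real.pi)) •
    rectIntegral (fun κ => Complex.exp (-(Complex.I * κ)) •
      Ring.inverse (A - Complex.exp (-(Complex.I * κ)) • (1 : H →L[ℂ] H))) μ a b

/-! ### Auxiliary lemmas for STATEMENT 5 -/

section Aux

/-- A bounded sequence satisfying an expanding recursion must vanish. -/
lemma rigid_zero {r : ℂ} (hr : 1 < ‖r‖) {B : ℝ} {w : ℤ → ℂ} (hB : ∀ n, ‖w n‖ ≤ B)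
    {N : ℤ} (hrec : ∀ n, N ≤ n → w (n + 1) = r * w n) : ∀ n, N ≤ n → w n = 0 := by
  have key : ∀ k : ℕ, w (N + k) = r ^ k * w N := by
    intro k; induction k with
    | zero => simp
    | succ k ih =>
      have h : w (N + k + 1) = r * w (N + k) := hrec _ (by omega)
      rw [show (N + (k+1:ℕ) : ℤ) = N + k + 1 by push_cast; ring, h, ih]; ring
  have hN : w N = 0 := by
    by_contra h
    have hpos : 0 < ‖w N‖ := norm_pos_iff.2 h
    obtain ⟨k, hk⟩ := pow_unbounded_of_one_lt (B / ‖w N‖) hr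
    have h1 : ‖w (N + k)‖ ≤ B := hB _
    rw [key k, norm_mul, norm_pow] at h1
    have h2 : B < ‖r‖ ^ k * ‖w N‖ := by
      rw [div_lt_iff₀ hpos] at hk; linarith
    linarith
  intro n hn
  have h3 : w (N + ((n - N).toNat : ℤ)) = r ^ (n - N).toNat * w N := key _
  rw [hN, mul_zero] at h3
  rwa [show N + ((n - N).toNat : ℤ) = n by omega] at h3

/-- Geometric decay from a contracting recursion towards `-∞`. -/
lemma geom_decay {q : ℂ} {B : ℝ} {w : ℤ → ℂ} (hB : ∀ n, ‖w n‖ ≤ B)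
    {N : ℤ} (hrec : ∀ n, n < N → w n = q * w (n + 1)) :
    ∀ n, n ≤ N → ‖w n‖ ≤ ‖q‖ ^ (N - n).toNat * B := by
  have key : ∀ k : ℕ, ∀ n, n = N - k → ‖w n‖ ≤ ‖q‖ ^ k * B := by
    intro k; induction k with
    | zero => intro n hn; simpa [hn] using hB N
    | succ k ih =>
      intro n hn
      have h1 : w n = q * w (n + 1) := hrec n (by omega)
      have h2 : ‖w (n+1)‖ ≤ ‖q‖ ^ k * B := ih (n+1) (by omega)
      rw [h1, norm_mul, pow_succ]
      calc ‖q‖ * ‖w (n+1)‖ ≤ ‖q‖ * (‖q‖ ^ k * B) :=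
            mul_le_mul_of_nonneg_left h2 (norm_nonneg _)
        _ = ‖q‖ ^ k * ‖q‖ * B := by ring
  intro n hn
  exact key (N - n).toNat n (by omega)

/-- The 1-dimensional weighted estimate combining decay of the eigenfunction and growth of
the conjugation weight. -/
lemma oneDim {M₀ : ℤ} (hM : 1 ≤ M₀) {t qn ed E B : ℝ}
    (ht0 : 0 < t) (ht1 : t ≤ 1) (hqn : 0 ≤ qn) (hed : 0 ≤ ed) (hE : 0 ≤ E) (hB : 0 ≤ B)
    (hqet : ed * qn ≤ t) {w : ℤ → ℂ} {g : ℤ → ℝ} (hg0 : ∀ n, 0 ≤ g n)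
    (hwB : ∀ n, ‖w n‖ ≤ B)
    (hzero : ∀ n, M₀ ≤ n → w n = 0)
    (hdec : ∀ n, n ≤ -(M₀+1) → ‖w n‖ ≤ qn ^ ((-(M₀+1) - n).toNat) * B)
    (hgmid : ∀ n, -(M₀+1) ≤ n → n ≤ M₀ → g n ≤ E)
    (hgleft : ∀ n, n ≤ -(M₀+1) → g n ≤ E * ed ^ ((-(M₀+1) - n).toNat)) :
    ∀ n, g n * ‖w n‖ ≤ (E * B / t ^ (M₀+1).toNat) * t ^ n.natAbs := by
  intro n
  have htK : (0:ℝ) < t ^ (M₀+1).toNat := pow_pos ht0 _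
  have hCb : 0 ≤ E * B / t ^ (M₀+1).toNat := by positivity
  rcases le_or_gt M₀ n with h | h
  · rw [hzero n h]; simp only [norm_zero, mul_zero]; positivity
  rcases le_or_gt n (-(M₀+1)) with h' | h'
  · set k := (-(M₀+1) - n).toNat with hk
    have h1 : g n * ‖w n‖ ≤ (E * ed ^ k) * (qn ^ k * B) :=
      mul_le_mul (hgleft n h') (hdec n h') (norm_nonneg _) (by positivity)
    have h2 : (E * ed ^ k) * (qn ^ k * B) = E * B * (ed * qn) ^ k := by
      rw [mul_pow]; ring
    have h3 : (ed * qn) ^ k ≤ t ^ k := pow_le_pow_left₀ (by positivity) hqet k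
    have h4 : n.natAbs = (M₀+1).toNat + k := by omega
    calc g n * ‖w n‖ ≤ E * B * (ed*qn)^k := by rw [← h2]; exact h1
      _ ≤ E * B * t ^ k := mul_le_mul_of_nonneg_left h3 (by positivity)
      _ = (E * B / t ^ (M₀+1).toNat) * t ^ n.natAbs := by
          rw [h4, pow_add]; field_simp
  · have h1 : g n * ‖w n‖ ≤ E * B := mul_le_mul (hgmid n (by omega) (by omega)) (hwB n)
      (norm_nonneg _) hE
    have h2 : n.natAbs ≤ (M₀+1).toNat := by omega
    have h3 : t ^ (M₀+1).toNat ≤ t ^ n.natAbs := pow_le_pow_of_le_one (le_of_lt ht0) ht1 h2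
    calc g n * ‖w n‖ ≤ E * B := h1
      _ = (E * B / t ^ (M₀+1).toNat) * t ^ (M₀+1).toNat := by field_simp
      _ ≤ (E * B / t ^ (M₀+1).toNat) * t ^ n.natAbs := mul_le_mul_of_nonneg_left h3 hCb

lemma summable_geo_int {s : ℝ} (h0 : 0 ≤ s) (h1 : s < 1) :
    Summable (fun m : ℤ => s ^ m.natAbs) := by
  apply Summable.of_nat_of_neg
  · simpa using summable_geometric_of_lt_one h0 h1
  · simpa using summable_geometric_of_lt_one h0 h1

lemma summable_geo_prod {s : ℝ} (h0 : 0 ≤ s) (h1 : s < 1) :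
    Summable (fun x : ℤ × ℤ => s ^ x.1.natAbs * s ^ x.2.natAbs) :=
  Summable.mul_of_nonneg (f := fun m : ℤ => s ^ m.natAbs) (g := fun m : ℤ => s ^ m.natAbs)
    (summable_geo_int h0 h1) (summable_geo_int h0 h1)
    (fun _ => pow_nonneg h0 _) (fun _ => pow_nonneg h0 _)

end Aux

section WalkAux

/-- The diagonal entries of `D_x(θ)` as a vector. -/
def phiF (θ : ℂ) (x : Site) : Chir → ℂ :=
  ![Complex.exp (Complex.I * θ * x.1), Complex.exp (-(Complex.I * θ * x.1)),
    Complex.exp (Complex.I * θ * x.2), Complex.exp (-(Complex.I * θ * x.2))]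

lemma Dmat_diag (θ : ℂ) (x : Site) : Dmat θ x = Matrix.diagonal (phiF θ x) := rfl

lemma phiF_mul (θ θ' : ℂ) (x : Site) (i : Chir) :
    phiF θ x i * phiF θ' x i = phiF (θ + θ') x i := by
  fin_cases i <;> simp [phiF, ← Complex.exp_add] <;> congr 1 <;> ring

lemma phiF_zero (x : Site) (i : Chir) : phiF 0 x i = 1 := by
  fin_cases i <;> simp [phiF]

lemma phiF_ne_zero (θ : ℂ) (x : Site) (i : Chir) : phiF θ x i ≠ 0 := by
  fin_cases i <;> simp [phiF, Complex.exp_ne_zero]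

lemma Dmat_mul_neg (θ : ℂ) (x : Site) : Dmat θ x * Dmat (-θ) x = 1 := by
  rw [Dmat_diag, Dmat_diag, Matrix.diagonal_mul_diagonal]
  have h : (fun i => phiF θ x i * phiF (-θ) x i) = fun _ => (1:ℂ) :=
    funext fun i => by rw [phiF_mul, add_neg_cancel, phiF_zero]
  rw [h, Matrix.diagonal_one]

lemma Dmat_inv_eq (θ : ℂ) (x : Site) : (Dmat θ x)⁻¹ = Dmat (-θ) x :=
  Matrix.inv_eq_right_inv (Dmat_mul_neg θ x)

lemma transCoin_entry (θ : ℂ) (C : Site → Matrix Chir Chir ℂ) (x : Site) (i j : Chir) :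
    transCoin θ C x i j = phiF θ x i * C x i j * phiF (-θ) x j := by
  rw [transCoin, Dmat_inv_eq, Dmat_diag, Dmat_diag, Matrix.mul_diagonal, Matrix.diagonal_mul]

lemma transCoin_one (θ : ℂ) (C : Site → Matrix Chir Chir ℂ) (x : Site) (h : C x = 1) :
    transCoin θ C x = 1 := by
  rw [transCoin, h, mul_one, Dmat_inv_eq, Dmat_mul_neg]

lemma key_identity (θ₁ θ₂ : ℂ) (C : Site → Matrix Chir Chir ℂ) (x : Site) (i j : Chir) :
    transCoin θ₂ C x i j * phiF (θ₂ - θ₁) x j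
      = phiF (θ₂ - θ₁) x i * transCoin θ₁ C x i j := by
  rw [transCoin_entry, transCoin_entry]
  have h1 : phiF (-θ₂) x j * phiF (θ₂ - θ₁) x j = phiF (-θ₁) x j := by
    rw [phiF_mul, show -θ₂ + (θ₂ - θ₁) = -θ₁ by ring]
  have h2 : phiF (θ₂ - θ₁) x i * phiF θ₁ x i = phiF θ₂ x i := by
    rw [phiF_mul, show θ₂ - θ₁ + θ₁ = θ₂ by ring]
  calc phiF θ₂ x i * C x i j * phiF (-θ₂) x j * phiF (θ₂ - θ₁) x j
      = phiF θ₂ x i * C x i j * (phiF (-θ₂) x j * phiF (θ₂ - θ₁) x j) := by ring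
    _ = phiF θ₂ x i * C x i j * phiF (-θ₁) x j := by rw [h1]
    _ = (phiF (θ₂ - θ₁) x i * phiF θ₁ x i) * C x i j * phiF (-θ₁) x j := by rw [h2]
    _ = phiF (θ₂ - θ₁) x i * (phiF θ₁ x i * C x i j * phiF (-θ₁) x j) := by ring

lemma phiF_norm (θ : ℂ) (x : Site) :
    ‖phiF θ x 0‖ = Real.exp (-θ.im * x.1) ∧ ‖phiF θ x 1‖ = Real.exp (θ.im * x.1) ∧
    ‖phiF θ x 2‖ = Real.exp (-θ.im * x.2) ∧ ‖phiF θ x 3‖ = Real.exp (θ.im * x.2) := by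
  refine ⟨?_, ?_, ?_, ?_⟩ <;>
    simp [phiF, Complex.norm_exp, Complex.mul_re, Complex.mul_im] <;> ring_nf

/-- Nearest neighbour in the direction associated to the chirality `i`. -/
def nbr (i : Chir) (x : Site) : Site :=
  ![((x.1 + 1, x.2) : Site), (x.1 - 1, x.2), (x.1, x.2 + 1), (x.1, x.2 - 1)] i

lemma phiF_shift0 (D : ℂ) (x : Site) :
    phiF D (x.1+1, x.2) 0 = Complex.exp (Complex.I * D) * phiF D x 0 := by
  show Complex.exp (Complex.I * D * ((x.1+1 : ℤ) : ℂ))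
      = Complex.exp (Complex.I * D) * Complex.exp (Complex.I * D * (x.1 : ℂ))
  rw [← Complex.exp_add]; congr 1; push_cast; ring

lemma phiF_shift1 (D : ℂ) (x : Site) :
    phiF D (x.1-1, x.2) 1 = Complex.exp (Complex.I * D) * phiF D x 1 := by
  show Complex.exp (-(Complex.I * D * ((x.1-1 : ℤ) : ℂ)))
      = Complex.exp (Complex.I * D) * Complex.exp (-(Complex.I * D * (x.1 : ℂ)))
  rw [← Complex.exp_add]; congr 1; push_cast; ring

lemma phiF_shift2 (D : ℂ) (x : Site) :
    phiF D (x.1, x.2+1) 2 = Complex.exp (Complex.I * D) * phiF D x 2 := by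
  show Complex.exp (Complex.I * D * ((x.2+1 : ℤ) : ℂ))
      = Complex.exp (Complex.I * D) * Complex.exp (Complex.I * D * (x.2 : ℂ))
  rw [← Complex.exp_add]; congr 1; push_cast; ring

lemma phiF_shift3 (D : ℂ) (x : Site) :
    phiF D (x.1, x.2-1) 3 = Complex.exp (Complex.I * D) * phiF D x 3 := by
  show Complex.exp (-(Complex.I * D * ((x.2-1 : ℤ) : ℂ)))
      = Complex.exp (Complex.I * D) * Complex.exp (-(Complex.I * D * (x.2 : ℂ)))
  rw [← Complex.exp_add]; congr 1; push_cast; ring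

lemma phiF_shift (D : ℂ) (x : Site) (i : Chir) :
    phiF D (nbr i x) i = Complex.exp (Complex.I * D) * phiF D x i := by
  have hi : i = 0 ∨ i = 1 ∨ i = 2 ∨ i = 3 := by fin_cases i <;> simp
  rcases hi with rfl | rfl | rfl | rfl
  · exact phiF_shift0 D x
  · exact phiF_shift1 D x
  · exact phiF_shift2 D x
  · exact phiF_shift3 D x

lemma walk_apply {θ : ℂ} {S M : H →L[ℂ] H} (hS : IsShiftOp S)
    {Cm : Site → Matrix Chir Chir ℂ} (hM : IsCoinOp M Cm) (u : H) (x : Site) (i : Chir) :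
    (transWalkOp θ S M u) x i
      = Complex.exp (-(Complex.I * θ)) * ∑ j : Chir, Cm (nbr i x) i j * u (nbr i x) j := by
  rw [transWalkOp]
  simp only [ContinuousLinearMap.smul_apply, ContinuousLinearMap.comp_apply,
    lp.coeFn_smul, Pi.smul_apply, PiLp.smul_apply, smul_eq_mul]
  congr 1
  have hi : i = 0 ∨ i = 1 ∨ i = 2 ∨ i = 3 := by fin_cases i <;> simp
  rcases hi with rfl | rfl | rfl | rfl
  · rw [(hS (M u) x).1, hM u (x.1+1, x.2) 0]; rfl
  · rw [(hS (M u) x).2.1, hM u (x.1-1, x.2) 1]; rfl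
  · rw [(hS (M u) x).2.2.1, hM u (x.1, x.2+1) 2]; rfl
  · rw [(hS (M u) x).2.2.2, hM u (x.1, x.2-1) 3]; rfl

lemma eigen_pt {θ z : ℂ} {S M : H →L[ℂ] H} (hS : IsShiftOp S)
    {Cm : Site → Matrix Chir Chir ℂ} (hM : IsCoinOp M Cm) {u : H}
    (hu : transWalkOp θ S M u = z • u) (x : Site) (i : Chir) :
    Complex.exp (-(Complex.I * θ)) * ∑ j : Chir, Cm (nbr i x) i j * u (nbr i x) j
      = z * u x i := by
  rw [← walk_apply hS hM u x i, hu]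
  simp [lp.coeFn_smul]

lemma sum_one_mul (y : Site) (u : H) (i : Chir) :
    ∑ j : Chir, (1 : Matrix Chir Chir ℂ) i j * u y j = u y i := by
  simp [Matrix.one_apply]

lemma coord_norm_le (f : V) (i : Chir) : ‖f i‖ ≤ ‖f‖ := by
  rw [EuclideanSpace.norm_eq]
  rw [show ‖f i‖ = Real.sqrt (‖f i‖^2) from (Real.sqrt_sq (norm_nonneg _)).symm]
  exact Real.sqrt_le_sqrt (Finset.single_le_sum (f := fun j => ‖f j‖^2)
    (fun j _ => sq_nonneg _) (Finset.mem_univ i))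

lemma not_innerDom {M₀ : ℤ} {y : Site}
    (h : M₀ + 1 ≤ y.1 ∨ y.1 ≤ -(M₀+1) ∨ M₀ + 1 ≤ y.2 ∨ y.2 ≤ -(M₀+1)) :
    y ∉ innerDom M₀ := by
  intro hc
  simp only [innerDom, Set.mem_setOf_eq] at hc
  obtain ⟨h1, h2⟩ := hc
  rw [abs_le] at h1 h2
  omega

end WalkAux
set_option maxHeartbeats 2000000 in
/-- Transfer of an `ℓ²` eigenfunction from the translation `θ₁` to the translation `θ₂`. -/
lemma transfer (M₀ : ℤ) (C : Site → Matrix Chir Chir ℂ) (hA1 : SatisfiesA1 C M₀)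
    (S : H →L[ℂ] H) (hS : IsShiftOp S) (θ₁ θ₂ : ℂ)
    (M1 M2 : H →L[ℂ] H)
    (hM1 : IsCoinOp M1 (transCoin θ₁ C)) (hM2 : IsCoinOp M2 (transCoin θ₂ C))
    (z : ℂ) (hz1 : Real.exp θ₁.im < ‖z‖) (hz2 : Real.exp θ₂.im < ‖z‖)
    (hex : ∃ u : H, u ≠ 0 ∧ (transWalkOp θ₁ S M1) u = z • u) :
    ∃ u : H, u ≠ 0 ∧ (transWalkOp θ₂ S M2) u = z • u := by
  obtain ⟨u, hu0, hu⟩ := hex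
  obtain ⟨hM, hC1⟩ := hA1
  have hzpos : 0 < ‖z‖ := lt_trans (Real.exp_pos _) hz1
  have hz0 : z ≠ 0 := norm_pos_iff.1 hzpos
  have hB0 : (0:ℝ) ≤ ‖u‖ := norm_nonneg u
  have hwB : ∀ (x : Site) (i : Chir), ‖u x i‖ ≤ ‖u‖ := fun x i =>
    (coord_norm_le (u x) i).trans (lp.norm_apply_le_norm (by norm_num) u x)
  -- the "free" equation outside the interaction region
  have hfree : ∀ (x : Site) (i : Chir), nbr i x ∉ innerDom M₀ →
      z * u x i = Complex.exp (-(Complex.I*θ₁)) * u (nbr i x) i := by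
    intro x i hx
    have h := eigen_pt hS hM1 hu x i
    rw [transCoin_one θ₁ C _ (hC1 _ hx), sum_one_mul] at h
    exact h.symm
  have hIre : (Complex.I * θ₁).re = -θ₁.im := by simp [Complex.mul_re]
  have hnr : ‖z * Complex.exp (Complex.I*θ₁)‖ = ‖z‖ * Real.exp (-θ₁.im) := by
    rw [norm_mul, Complex.norm_exp, hIre]
  have hnq : ‖Complex.exp (-(Complex.I*θ₁)) / z‖ = Real.exp θ₁.im / ‖z‖ := by
    rw [norm_div, Complex.norm_exp,
      show (-(Complex.I*θ₁)).re = θ₁.im by simp [Complex.mul_re]]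
  have hr1 : 1 < ‖z * Complex.exp (Complex.I*θ₁)‖ := by
    rw [hnr]
    have h1 : Real.exp θ₁.im * Real.exp (-θ₁.im) = 1 := by rw [← Real.exp_add]; simp
    nlinarith [Real.exp_pos (-θ₁.im)]
  have hrec : ∀ (x : Site) (i : Chir), nbr i x ∉ innerDom M₀ →
      u (nbr i x) i = (z * Complex.exp (Complex.I*θ₁)) * u x i := by
    intro x i hx
    have h := hfree x i hx
    have hee : Complex.exp (Complex.I*θ₁) * Complex.exp (-(Complex.I*θ₁)) = 1 := by
      rw [← Complex.exp_add]; simp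
    calc u (nbr i x) i
        = (Complex.exp (Complex.I*θ₁) * Complex.exp (-(Complex.I*θ₁))) * u (nbr i x) i := by
          rw [hee, one_mul]
      _ = Complex.exp (Complex.I*θ₁) * (Complex.exp (-(Complex.I*θ₁)) * u (nbr i x) i) := by
          ring
      _ = Complex.exp (Complex.I*θ₁) * (z * u x i) := by rw [← h]
      _ = (z * Complex.exp (Complex.I*θ₁)) * u x i := by ring
  have hqrec : ∀ (x : Site) (i : Chir), nbr i x ∉ innerDom M₀ →
      u x i = (Complex.exp (-(Complex.I*θ₁)) / z) * u (nbr i x) i := by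
    intro x i hx
    have h := hfree x i hx
    rw [div_mul_eq_mul_div, ← h, mul_comm z (u x i), mul_div_assoc, div_self hz0, mul_one]
  have habs : ∀ m : ℤ, M₀ < |m| → (M₀ + 1 ≤ m ∨ m ≤ -(M₀+1)) := by
    intro m hm
    rcases abs_cases m with ⟨he, _⟩ | ⟨he, _⟩ <;> omega
  -- vanishing of the four components in appropriate half-planes
  have h0zero : ∀ x : Site, (M₀ ≤ x.1 ∨ M₀ < |x.2|) → u x 0 = 0 := by
    intro x hx
    have hrec0 : ∀ n : ℤ, x.1 ≤ n → u (n+1, x.2) 0 = (z * Complex.exp (Complex.I*θ₁)) * u (n, x.2) 0 := by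
      intro n hn
      refine hrec (n, x.2) 0 (not_innerDom ?_)
      rcases hx with hx | hx
      · left; show M₀ + 1 ≤ n + 1; omega
      · rcases habs _ hx with h | h
        · right; right; left; exact h
        · right; right; right; exact h
    have h := rigid_zero hr1 (w := fun n => u (n, x.2) 0) (fun n => hwB _ _) hrec0 x.1 le_rfl
    simpa using h
  have h1zero : ∀ x : Site, (x.1 ≤ -M₀ ∨ M₀ < |x.2|) → u x 1 = 0 := by
    intro x hx
    have hrec1 : ∀ n : ℤ, -x.1 ≤ n → u (-(n+1), x.2) 1 = (z * Complex.exp (Complex.I*θ₁)) * u (-n, x.2) 1 := by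
      intro n hn
      have h : u ((-n) - 1, x.2) 1 = (z * Complex.exp (Complex.I*θ₁)) * u (-n, x.2) 1 := by
        refine hrec (-n, x.2) 1 (not_innerDom ?_)
        rcases hx with hx | hx
        · right; left; show -n - 1 ≤ -(M₀+1); omega
        · rcases habs _ hx with h | h
          · right; right; left; exact h
          · right; right; right; exact h
      rwa [show (-(n+1) : ℤ) = -n - 1 by ring]
    have h := rigid_zero hr1 (w := fun n => u (-n, x.2) 1) (fun n => hwB _ _) hrec1 (-x.1) le_rfl
    simpa using h
  have h2zero : ∀ x : Site, (M₀ ≤ x.2 ∨ M₀ < |x.1|) → u x 2 = 0 := by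
    intro x hx
    have hrec2 : ∀ n : ℤ, x.2 ≤ n → u (x.1, n+1) 2 = (z * Complex.exp (Complex.I*θ₁)) * u (x.1, n) 2 := by
      intro n hn
      refine hrec (x.1, n) 2 (not_innerDom ?_)
      rcases hx with hx | hx
      · right; right; left; show M₀ + 1 ≤ n + 1; omega
      · rcases habs _ hx with h | h
        · left; exact h
        · right; left; exact h
    have h := rigid_zero hr1 (w := fun n => u (x.1, n) 2) (fun n => hwB _ _) hrec2 x.2 le_rfl
    simpa using h
  have h3zero : ∀ x : Site, (x.2 ≤ -M₀ ∨ M₀ < |x.1|) → u x 3 = 0 := by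
    intro x hx
    have hrec3 : ∀ n : ℤ, -x.2 ≤ n → u (x.1, -(n+1)) 3 = (z * Complex.exp (Complex.I*θ₁)) * u (x.1, -n) 3 := by
      intro n hn
      have h : u (x.1, (-n) - 1) 3 = (z * Complex.exp (Complex.I*θ₁)) * u (x.1, -n) 3 := by
        refine hrec (x.1, -n) 3 (not_innerDom ?_)
        rcases hx with hx | hx
        · right; right; right; show -n - 1 ≤ -(M₀+1); omega
        · rcases habs _ hx with h | h
          · left; exact h
          · right; left; exact h
      rwa [show (-(n+1) : ℤ) = -n - 1 by ring]
    have h := rigid_zero hr1 (w := fun n => u (x.1, -n) 3) (fun n => hwB _ _) hrec3 (-x.2) le_rfl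
    simpa using h
  -- geometric decay of the four components
  have h0dec : ∀ x : Site, x.1 ≤ -(M₀+1) →
      ‖u x 0‖ ≤ (Real.exp θ₁.im / ‖z‖) ^ ((-(M₀+1) - x.1).toNat) * ‖u‖ := by
    intro x hx
    have hqr : ∀ n : ℤ, n < -(M₀+1) →
        u (n, x.2) 0 = (Complex.exp (-(Complex.I*θ₁)) / z) * u (n+1, x.2) 0 := by
      intro n hn
      exact hqrec (n, x.2) 0 (not_innerDom (Or.inr (Or.inl (by show n+1 ≤ -(M₀+1); omega))))
    have h := geom_decay (w := fun n => u (n, x.2) 0) (fun n => hwB _ _) hqr x.1 hx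
    rw [hnq] at h
    simpa using h
  have h1dec : ∀ x : Site, M₀+1 ≤ x.1 →
      ‖u x 1‖ ≤ (Real.exp θ₁.im / ‖z‖) ^ ((x.1 - (M₀+1)).toNat) * ‖u‖ := by
    intro x hx
    have hqr : ∀ n : ℤ, n < -(M₀+1) →
        u (-n, x.2) 1 = (Complex.exp (-(Complex.I*θ₁)) / z) * u (-(n+1), x.2) 1 := by
      intro n hn
      have h := hqrec (-n, x.2) 1 (not_innerDom (Or.inl (by show M₀+1 ≤ -n - 1; omega)))
      rwa [show (-(n+1) : ℤ) = -n - 1 by ring]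
    have h := geom_decay (w := fun n => u (-n, x.2) 1) (fun n => hwB _ _) hqr (-x.1) (by omega)
    rw [hnq, show (-(M₀+1) - (-x.1)) = x.1 - (M₀+1) by ring] at h
    simpa using h
  have h2dec : ∀ x : Site, x.2 ≤ -(M₀+1) →
      ‖u x 2‖ ≤ (Real.exp θ₁.im / ‖z‖) ^ ((-(M₀+1) - x.2).toNat) * ‖u‖ := by
    intro x hx
    have hqr : ∀ n : ℤ, n < -(M₀+1) →
        u (x.1, n) 2 = (Complex.exp (-(Complex.I*θ₁)) / z) * u (x.1, n+1) 2 := by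
      intro n hn
      exact hqrec (x.1, n) 2 (not_innerDom (Or.inr (Or.inr (Or.inr (by show n+1 ≤ -(M₀+1); omega)))))
    have h := geom_decay (w := fun n => u (x.1, n) 2) (fun n => hwB _ _) hqr x.2 hx
    rw [hnq] at h
    simpa using h
  have h3dec : ∀ x : Site, M₀+1 ≤ x.2 →
      ‖u x 3‖ ≤ (Real.exp θ₁.im / ‖z‖) ^ ((x.2 - (M₀+1)).toNat) * ‖u‖ := by
    intro x hx
    have hqr : ∀ n : ℤ, n < -(M₀+1) →
        u (x.1, -n) 3 = (Complex.exp (-(Complex.I*θ₁)) / z) * u (x.1, -(n+1)) 3 := by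
      intro n hn
      have h := hqrec (x.1, -n) 3 (not_innerDom (Or.inr (Or.inr (Or.inl (by show M₀+1 ≤ -n - 1; omega)))))
      rwa [show (-(n+1) : ℤ) = -n - 1 by ring]
    have h := geom_decay (w := fun n => u (x.1, -n) 3) (fun n => hwB _ _) hqr (-x.2) (by omega)
    rw [hnq, show (-(M₀+1) - (-x.2)) = x.2 - (M₀+1) by ring] at h
    simpa using h
    -- constants
  set τ : ℝ := θ₂.im - θ₁.im with hτ
  set t : ℝ := Real.exp θ₂.im / ‖z‖ with htdef
  set E : ℝ := Real.exp (|τ| * ((M₀:ℝ)+1)) with hEdef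
  have ht0 : 0 < t := div_pos (Real.exp_pos _) hzpos
  have ht1 : t < 1 := (div_lt_one hzpos).2 hz2
  have hE0 : (0:ℝ) ≤ E := (Real.exp_pos _).le
  have hqet : Real.exp τ * (Real.exp θ₁.im / ‖z‖) = t := by
    rw [htdef, ← mul_div_assoc, ← Real.exp_add, show τ + θ₁.im = θ₂.im by rw [hτ]; ring]
  have hsub : (θ₂ - θ₁).im = τ := by rw [hτ, Complex.sub_im]
  -- estimates on the conjugation weight
  have hgmid : ∀ n : ℤ, -(M₀+1) ≤ n → n ≤ M₀ → Real.exp (-τ * n) ≤ E := by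
    intro n h1 h2
    rw [hEdef]
    apply Real.exp_le_exp.2
    have hn : |(n:ℝ)| ≤ (M₀:ℝ) + 1 := by
      rw [← Int.cast_abs]
      exact_mod_cast (abs_le.2 ⟨by omega, by omega⟩ : |n| ≤ M₀ + 1)
    calc -τ * (n:ℝ) ≤ |(-τ) * (n:ℝ)| := le_abs_self _
      _ = |τ| * |(n:ℝ)| := by rw [abs_mul, abs_neg]
      _ ≤ |τ| * ((M₀:ℝ)+1) := mul_le_mul_of_nonneg_left hn (abs_nonneg _)
  have hgleft : ∀ n : ℤ, n ≤ -(M₀+1) →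
      Real.exp (-τ * n) ≤ E * (Real.exp τ) ^ ((-(M₀+1) - n).toNat) := by
    intro n hn
    have hk : ((((-(M₀+1) - n).toNat : ℕ)) : ℝ) = -((M₀:ℝ)+1) - n := by
      have h : (((-(M₀+1) - n).toNat : ℕ) : ℤ) = -(M₀+1) - n := by omega
      exact_mod_cast h
    have hn' : (n:ℝ) = -((M₀:ℝ)+1) - (((-(M₀+1) - n).toNat : ℕ) : ℝ) := by
      rw [hk]; ring
    rw [show -τ * (n:ℝ) = τ * ((M₀:ℝ)+1) + (((-(M₀+1) - n).toNat : ℕ) : ℝ) * τ by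
      rw [hn']; ring]
    rw [Real.exp_add, Real.exp_nat_mul]
    refine mul_le_mul_of_nonneg_right (Real.exp_le_exp.2 ?_) (pow_nonneg (Real.exp_pos _).le _)
    exact mul_le_mul_of_nonneg_right (le_abs_self τ) (by positivity)
  -- the per-component weighted bounds
  set Cp : ℝ := E * ‖u‖ / t ^ (M₀+1).toNat with hCpdef
  have hCp0 : 0 ≤ Cp := div_nonneg (mul_nonneg hE0 hB0) (pow_nonneg ht0.le _)
  set Cb : ℝ := Cp / t ^ M₀.toNat with hCbdef
  have hCb0 : 0 ≤ Cb := div_nonneg hCp0 (pow_nonneg ht0.le _)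
  have htM : (0:ℝ) < t ^ M₀.toNat := pow_pos ht0 _
  have hCpCb : ∀ a : ℕ, Cp * t ^ a = Cb * (t ^ a * t ^ M₀.toNat) := by
    intro a; rw [hCbdef]; field_simp
  have hmono : ∀ (a : ℕ) (m : ℤ), |m| ≤ M₀ → Cb * (t ^ a * t ^ M₀.toNat)
      ≤ Cb * (t ^ a * t ^ m.natAbs) := by
    intro a m hm
    obtain ⟨hm1, hm2⟩ := abs_le.1 hm
    refine mul_le_mul_of_nonneg_left (mul_le_mul_of_nonneg_left ?_ (pow_nonneg ht0.le _)) hCb0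
    exact pow_le_pow_of_le_one ht0.le ht1.le (by omega)
  have vb0 : ∀ x : Site, ‖phiF (θ₂-θ₁) x 0 * u x 0‖
      ≤ Cb * (t ^ x.1.natAbs * t ^ x.2.natAbs) := by
    intro x
    by_cases hx2 : |x.2| ≤ M₀
    · have h := oneDim hM ht0 ht1.le (div_nonneg (Real.exp_pos _).le hzpos.le)
        (Real.exp_pos τ).le hE0 hB0 (le_of_eq hqet)
        (g := fun n : ℤ => Real.exp (-τ * n)) (fun n => (Real.exp_pos _).le)
        (w := fun n : ℤ => u (n, x.2) 0) (fun n => hwB _ _)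
        (fun n hn => h0zero (n, x.2) (Or.inl hn))
        (fun n hn => h0dec (n, x.2) hn)
        hgmid hgleft x.1
    -- h : Real.exp (-τ * x.1) * ‖u (x.1, x.2) 0‖ ≤ Cp * t ^ x.1.natAbs
      have hnorm : ‖phiF (θ₂-θ₁) x 0 * u x 0‖ = Real.exp (-τ * x.1) * ‖u x 0‖ := by
        rw [norm_mul, (phiF_norm (θ₂-θ₁) x).1, hsub]
      calc ‖phiF (θ₂-θ₁) x 0 * u x 0‖ = Real.exp (-τ * x.1) * ‖u x 0‖ := hnorm
        _ ≤ Cp * t ^ x.1.natAbs := by simpa using h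
        _ = Cb * (t ^ x.1.natAbs * t ^ M₀.toNat) := hCpCb _
        _ ≤ Cb * (t ^ x.1.natAbs * t ^ x.2.natAbs) := hmono _ _ hx2
    · rw [h0zero x (Or.inr (not_le.1 hx2)), mul_zero, norm_zero]
      positivity
  have vb1 : ∀ x : Site, ‖phiF (θ₂-θ₁) x 1 * u x 1‖
      ≤ Cb * (t ^ x.1.natAbs * t ^ x.2.natAbs) := by
    intro x
    by_cases hx2 : |x.2| ≤ M₀
    · have h := oneDim hM ht0 ht1.le (div_nonneg (Real.exp_pos _).le hzpos.le)
        (Real.exp_pos τ).le hE0 hB0 (le_of_eq hqet)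
        (g := fun n : ℤ => Real.exp (-τ * n)) (fun n => (Real.exp_pos _).le)
        (w := fun n : ℤ => u (-n, x.2) 1) (fun n => hwB _ _)
        (fun n hn => h1zero (-n, x.2) (Or.inl (by omega)))
        (fun n hn => by
          have h := h1dec (-n, x.2) (by omega)
          rwa [show ((-n : ℤ) - (M₀+1)) = -(M₀+1) - n by ring] at h)
        hgmid hgleft (-x.1)
      simp only [Int.cast_neg, neg_mul_neg, neg_neg, Int.natAbs_neg] at h
    -- h : Real.exp (τ * x.1) * ‖u (x.1, x.2) 1‖ ≤ Cp * t ^ x.1.natAbs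
      have hnorm : ‖phiF (θ₂-θ₁) x 1 * u x 1‖ = Real.exp (τ * x.1) * ‖u x 1‖ := by
        rw [norm_mul, (phiF_norm (θ₂-θ₁) x).2.1, hsub]
      calc ‖phiF (θ₂-θ₁) x 1 * u x 1‖ = Real.exp (τ * x.1) * ‖u x 1‖ := hnorm
        _ ≤ Cp * t ^ x.1.natAbs := by simpa using h
        _ = Cb * (t ^ x.1.natAbs * t ^ M₀.toNat) := hCpCb _
        _ ≤ Cb * (t ^ x.1.natAbs * t ^ x.2.natAbs) := hmono _ _ hx2
    · rw [h1zero x (Or.inr (not_le.1 hx2)), mul_zero, norm_zero]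
      positivity
  have vb2 : ∀ x : Site, ‖phiF (θ₂-θ₁) x 2 * u x 2‖
      ≤ Cb * (t ^ x.1.natAbs * t ^ x.2.natAbs) := by
    intro x
    by_cases hx1 : |x.1| ≤ M₀
    · have h := oneDim hM ht0 ht1.le (div_nonneg (Real.exp_pos _).le hzpos.le)
        (Real.exp_pos τ).le hE0 hB0 (le_of_eq hqet)
        (g := fun n : ℤ => Real.exp (-τ * n)) (fun n => (Real.exp_pos _).le)
        (w := fun n : ℤ => u (x.1, n) 2) (fun n => hwB _ _)
        (fun n hn => h2zero (x.1, n) (Or.inl hn))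
        (fun n hn => h2dec (x.1, n) hn)
        hgmid hgleft x.2
      have hnorm : ‖phiF (θ₂-θ₁) x 2 * u x 2‖ = Real.exp (-τ * x.2) * ‖u x 2‖ := by
        rw [norm_mul, (phiF_norm (θ₂-θ₁) x).2.2.1, hsub]
      calc ‖phiF (θ₂-θ₁) x 2 * u x 2‖ = Real.exp (-τ * x.2) * ‖u x 2‖ := hnorm
        _ ≤ Cp * t ^ x.2.natAbs := by simpa using h
        _ = Cb * (t ^ x.2.natAbs * t ^ M₀.toNat) := hCpCb _
        _ ≤ Cb * (t ^ x.2.natAbs * t ^ x.1.natAbs) := hmono _ _ hx1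
        _ = Cb * (t ^ x.1.natAbs * t ^ x.2.natAbs) := by ring
    · rw [h2zero x (Or.inr (not_le.1 hx1)), mul_zero, norm_zero]
      positivity
  have vb3 : ∀ x : Site, ‖phiF (θ₂-θ₁) x 3 * u x 3‖
      ≤ Cb * (t ^ x.1.natAbs * t ^ x.2.natAbs) := by
    intro x
    by_cases hx1 : |x.1| ≤ M₀
    · have h := oneDim hM ht0 ht1.le (div_nonneg (Real.exp_pos _).le hzpos.le)
        (Real.exp_pos τ).le hE0 hB0 (le_of_eq hqet)
        (g := fun n : ℤ => Real.exp (-τ * n)) (fun n => (Real.exp_pos _).le)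
        (w := fun n : ℤ => u (x.1, -n) 3) (fun n => hwB _ _)
        (fun n hn => h3zero (x.1, -n) (Or.inl (by omega)))
        (fun n hn => by
          have h := h3dec (x.1, -n) (by omega)
          rwa [show ((-n : ℤ) - (M₀+1)) = -(M₀+1) - n by ring] at h)
        hgmid hgleft (-x.2)
      simp only [Int.cast_neg, neg_mul_neg, neg_neg, Int.natAbs_neg] at h
      have hnorm : ‖phiF (θ₂-θ₁) x 3 * u x 3‖ = Real.exp (τ * x.2) * ‖u x 3‖ := by
        rw [norm_mul, (phiF_norm (θ₂-θ₁) x).2.2.2, hsub]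
      calc ‖phiF (θ₂-θ₁) x 3 * u x 3‖ = Real.exp (τ * x.2) * ‖u x 3‖ := hnorm
        _ ≤ Cp * t ^ x.2.natAbs := by simpa using h
        _ = Cb * (t ^ x.2.natAbs * t ^ M₀.toNat) := hCpCb _
        _ ≤ Cb * (t ^ x.2.natAbs * t ^ x.1.natAbs) := hmono _ _ hx1
        _ = Cb * (t ^ x.1.natAbs * t ^ x.2.natAbs) := by ring
    · rw [h3zero x (Or.inr (not_le.1 hx1)), mul_zero, norm_zero]
      positivity
  have vb : ∀ (x : Site) (i : Chir), ‖phiF (θ₂-θ₁) x i * u x i‖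
      ≤ Cb * (t ^ x.1.natAbs * t ^ x.2.natAbs) := by
    intro x i
    have hi : i = 0 ∨ i = 1 ∨ i = 2 ∨ i = 3 := by fin_cases i <;> simp
    rcases hi with rfl | rfl | rfl | rfl
    · exact vb0 x
    · exact vb1 x
    · exact vb2 x
    · exact vb3 x
    -- the conjugated function and its ℓ² membership
  set vf : Site → V := show Site → V from fun x => WithLp.toLp 2 (fun j => phiF (θ₂-θ₁) x j * u x j) with hvfdef
  have hvf : ∀ (x : Site) (j : Chir), vf x j = phiF (θ₂-θ₁) x j * u x j := fun x j => rfl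
  have hvfn : ∀ x : Site, ‖vf x‖ ≤ 2 * (Cb * (t ^ x.1.natAbs * t ^ x.2.natAbs)) := by
    intro x
    set D : ℝ := Cb * (t ^ x.1.natAbs * t ^ x.2.natAbs) with hD
    have hD0 : 0 ≤ D := mul_nonneg hCb0 (by positivity)
    rw [EuclideanSpace.norm_eq]
    have hsum4 : ∑ i : Chir, ‖vf x i‖^2 ≤ 4 * D^2 := by
      rw [Fin.sum_univ_four]
      have e0 : ‖vf x 0‖^2 ≤ D^2 := by
        rw [hvf]; exact pow_le_pow_left₀ (norm_nonneg _) (vb x 0) 2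
      have e1 : ‖vf x 1‖^2 ≤ D^2 := by
        rw [hvf]; exact pow_le_pow_left₀ (norm_nonneg _) (vb x 1) 2
      have e2 : ‖vf x 2‖^2 ≤ D^2 := by
        rw [hvf]; exact pow_le_pow_left₀ (norm_nonneg _) (vb x 2) 2
      have e3 : ‖vf x 3‖^2 ≤ D^2 := by
        rw [hvf]; exact pow_le_pow_left₀ (norm_nonneg _) (vb x 3) 2
      linarith
    calc Real.sqrt (∑ i : Chir, ‖vf x i‖^2) ≤ Real.sqrt (4 * D^2) := Real.sqrt_le_sqrt hsum4
      _ = 2 * D := by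
          rw [show (4:ℝ) * D^2 = (2*D)^2 by ring, Real.sqrt_sq (by linarith)]
  have hmem : Memℓp vf 2 := by
    apply memℓp_gen
    have hrp : ∀ y : ℝ, 0 ≤ y → y ^ ((2:ENNReal)).toReal = y^(2:ℕ) := by
      intro y hy
      rw [show ((2:ENNReal)).toReal = ((2:ℕ):ℝ) by norm_num, Real.rpow_natCast]
    have hdom : Summable (fun x : Site =>
        (2*Cb)^2 * ((t^2) ^ x.1.natAbs * (t^2) ^ x.2.natAbs)) :=
      (summable_geo_prod (by positivity) (by nlinarith)).mul_left _
    refine Summable.of_nonneg_of_le (fun x => ?_) (fun x => ?_) hdom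
    · exact Real.rpow_nonneg (norm_nonneg _) _
    · rw [hrp _ (norm_nonneg _)]
      calc ‖vf x‖^(2:ℕ) ≤ (2 * (Cb * (t ^ x.1.natAbs * t ^ x.2.natAbs)))^(2:ℕ) :=
            pow_le_pow_left₀ (norm_nonneg _) (hvfn x) 2
        _ = (2*Cb)^2 * ((t^2) ^ x.1.natAbs * (t^2) ^ x.2.natAbs) := by
            rw [show (2 * (Cb * (t ^ x.1.natAbs * t ^ x.2.natAbs)))^(2:ℕ)
                = (2*Cb)^2 * ((t ^ x.1.natAbs)^2 * (t ^ x.2.natAbs)^2) by ring,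
              ← pow_mul, ← pow_mul, mul_comm x.1.natAbs 2, mul_comm x.2.natAbs 2,
              pow_mul, pow_mul]
  refine ⟨⟨vf, hmem⟩, ?_, ?_⟩
  · -- nonvanishing
    intro h0
    apply hu0
    ext x i
    have h : vf x i = 0 := by
      have := congrArg (fun (w : H) => w x i) h0
      simpa using this
    rw [hvf] at h
    rcases mul_eq_zero.1 h with h | h
    · exact absurd h (phiF_ne_zero _ _ _)
    · simpa using h
  · -- the eigenvalue equation for θ₂
    ext x i
    rw [walk_apply hS hM2 _ x i]
    have hcoe : ∀ (y : Site) (j : Chir), ((⟨vf, hmem⟩ : H) : ∀ y, V) y j = vf y j :=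
      fun y j => rfl
    have hsum : ∑ j : Chir, transCoin θ₂ C (nbr i x) i j * ((⟨vf, hmem⟩ : H) : ∀ y, V) (nbr i x) j
        = phiF (θ₂-θ₁) (nbr i x) i
            * ∑ j : Chir, transCoin θ₁ C (nbr i x) i j * u (nbr i x) j := by
      rw [Finset.mul_sum]
      refine Finset.sum_congr rfl fun j _ => ?_
      rw [hcoe, hvf, ← mul_assoc, key_identity θ₁ θ₂ C (nbr i x) i j]
      ring
    rw [hsum, phiF_shift]
    have h1 := eigen_pt hS hM1 hu x i
    have hee : Complex.exp (-(Complex.I*θ₂)) * Complex.exp (Complex.I*(θ₂-θ₁))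
        = Complex.exp (-(Complex.I*θ₁)) := by
      rw [← Complex.exp_add]; congr 1; ring
    have hRHS : ((z • (⟨vf, hmem⟩ : H) : H) : ∀ y, V) x i
        = z * (phiF (θ₂-θ₁) x i * u x i) := by
      simp [lp.coeFn_smul, hvf]
    rw [hRHS]
    linear_combination (phiF (θ₂-θ₁) x i
        * (∑ j : Chir, transCoin θ₁ C (nbr i x) i j * u (nbr i x) j)) * hee
      + phiF (θ₂-θ₁) x i * h1


/-- eigenvalues of `U(θ)` outside the circle of radius `e^{Im θ}` do not depend on
the choice of `θ`; in particular the notion of resonance is independent of `θ`. -/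
theorem resonance_independent_of_theta
    (M₀ : ℤ) (C : Site → Matrix Chir Chir ℂ)
    (hC : IsUnitaryCoin C) (hA1 : SatisfiesA1 C M₀)
    (S : H →L[ℂ] H) (hS : IsShiftOp S)
    (θ₁ θ₂ : ℂ) (hθ₁ : θ₁.im < 0) (hθ₂ : θ₂.im < 0)
    (M1 M2 : H →L[ℂ] H)
    (hM1 : IsCoinOp M1 (transCoin θ₁ C)) (hM2 : IsCoinOp M2 (transCoin θ₂ C))
    (z : ℂ) (hz1 : Real.exp θ₁.im < ‖z‖) (hz2 : Real.exp θ₂.im < ‖z‖) :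
    (∃ u : H, u ≠ 0 ∧ (transWalkOp θ₁ S M1) u = z • u) ↔
    (∃ u : H, u ≠ 0 ∧ (transWalkOp θ₂ S M2) u = z • u) :=
  ⟨fun h => transfer M₀ C hA1 S hS θ₁ θ₂ M1 M2 hM1 hM2 z hz1 hz2 h,
   fun h => transfer M₀ C hA1 S hS θ₂ θ₁ M2 M1 hM2 hM1 z hz2 hz1 h⟩

end QWPaper
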